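/- Let p ∈ (0,1), q = 1-p, and suppose f: [0,∞) → (0,1] is continuous with f(0) = 1 and satisfies f((1-p)s)·((1-p) + p·f(s))·(1 - (1-q)·f(qs)) = q·f(qs) for all s ≥ 0. Then the function ξ defined by 1/f(s) = 1 + ξ(s) satisfies ξ(s) = (1/(1-p))·ξ((1-p)s) for all s ≥ 0. -/
import Mathlib


theorem stmt_11 (p q : ℝ) (hp : p ∈ Set.Ioo (0:ℝ) 1) (hq : q = 1 - p)
    (f : ℝ → ℝ) (hcont : ContinuousOn f (Set.Ici 0))
    (hrange : ∀ s : ℝ, 0 ≤ s → f s ∈ Set.Ioc (0:ℝ) 1) (h0 : f 0 = 1)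
    (heq : ∀ s : ℝ, 0 ≤ s →
      f ((1 - p) * s) * ((1 - p) + p * f s) * (1 - (1 - q) * f (q * s)) = q * f (q * s))
    (ξ : ℝ → ℝ) (hξ : ∀ s : ℝ, 0 ≤ s → 1 / f s = 1 + ξ s) :
    ∀ s : ℝ, 0 ≤ s → ξ s = (1 / (1 - p)) * ξ ((1 - p) * s) := by
  obtain ⟨hp0, hp1⟩ := hp
  have h1p : (0:ℝ) < 1 - p := by linarith
  subst hq
  intro s hs
  have hps : 0 ≤ (1 - p) * s := mul_nonneg h1p.le hs
  have hf := hrange s hs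
  have hg := hrange ((1 - p) * s) hps
  have hf0 : 0 < f s := hf.1
  have hg0 : 0 < f ((1 - p) * s) := hg.1
  have he := heq s hs
  -- cancel f((1-p)s): equation gives f s = f((1-p)s) * ((1-p) + p * f s)
  have h3 : ((1 - p + p * f s) * (1 - p * f ((1 - p) * s))) * f ((1 - p) * s)
      = (1 - p) * f ((1 - p) * s) := by linear_combination he
  have h4 := mul_right_cancel₀ hg0.ne' h3
  have key : f s = f ((1 - p) * s) * ((1 - p) + p * f s) := by
    have h5 : p * f s = p * (f ((1 - p) * s) * ((1 - p) + p * f s)) := by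
      linear_combination h4
    exact mul_left_cancel₀ hp0.ne' h5
  have e1 := hξ s hs
  have e2 := hξ ((1 - p) * s) hps
  have h1 : ξ s = 1 / f s - 1 := by linarith
  have h2 : ξ ((1 - p) * s) = 1 / f ((1 - p) * s) - 1 := by linarith
  rw [h1, h2]
  field_simp
  nlinarith [key, mul_pos hg0 hf0]
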